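/- For every n ∈ ℕ there exists a constant Cₙ > 0 such that for every normed space X and all x, h ∈ X, sup over t ∈ [−1,1], t ≠ 0, of |(‖x + t·h‖^{2^n} + ‖x − t·h‖^{2^n} − 2‖x‖^{2^n})/t| ≤ Cₙ·(‖x‖^{2^n} + ‖h‖^{2^n}). -/
import Mathlib


open Filter Topology

lemma aux_abs_pow_sub_pow_le (m : ℕ) {a c M : ℝ} (ha : 0 ≤ a) (hc : 0 ≤ c)
    (haM : a ≤ M) (hcM : c ≤ M) :
    |a ^ m - c ^ m| ≤ m * M ^ (m - 1) * |a - c| := by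
  have hM : 0 ≤ M := ha.trans haM
  have key : a ^ m - c ^ m = (∑ i ∈ Finset.range m, a ^ i * c ^ (m - 1 - i)) * (a - c) :=
    (geom_sum₂_mul a c m).symm
  rw [key, abs_mul]
  gcongr
  calc |∑ i ∈ Finset.range m, a ^ i * c ^ (m - 1 - i)|
      ≤ ∑ i ∈ Finset.range m, |a ^ i * c ^ (m - 1 - i)| := Finset.abs_sum_le_sum_abs _ _
    _ ≤ ∑ i ∈ Finset.range m, M ^ (m - 1) := by
        apply Finset.sum_le_sum
        intro i hi
        rw [Finset.mem_range] at hi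
        rw [abs_mul, abs_pow, abs_pow, abs_of_nonneg ha, abs_of_nonneg hc]
        calc a ^ i * c ^ (m - 1 - i) ≤ M ^ i * M ^ (m - 1 - i) := by
              gcongr
          _ = M ^ (m - 1) := by
              rw [← pow_add]
              congr 1
              omega
    _ = m * M ^ (m - 1) := by rw [Finset.sum_const, Finset.card_range, nsmul_eq_mul]

/-- For every `n` there is a constant `C > 0`, independent of the normed space and
of `x, h`, bounding the symmetric difference quotients of the `2^n`-th power of the
norm for `t ∈ [-1,1] \ {0}`. -/
theorem exists_const_bound_pow_symmetric_quotient.{u} (n : ℕ) :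
    ∃ C : ℝ, 0 < C ∧
      ∀ (X : Type u) [NormedAddCommGroup X] [NormedSpace ℝ X], ∀ x h : X,
        ∀ t : ℝ, t ∈ Set.Icc (-1 : ℝ) 1 → t ≠ 0 →
          |(‖x + t • h‖ ^ (2 ^ n) + ‖x - t • h‖ ^ (2 ^ n) - 2 * ‖x‖ ^ (2 ^ n)) / t|
            ≤ C * (‖x‖ ^ (2 ^ n) + ‖h‖ ^ (2 ^ n)) := by
  set m : ℕ := 2 ^ n with hm
  have hm1 : 1 ≤ m := Nat.one_le_two_pow
  refine ⟨2 * m * 2 ^ m, by positivity, ?_⟩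
  intro X _ _ x h t ht ht0
  have htabs : |t| ≤ 1 := abs_le.mpr ht
  have htpos : 0 < |t| := abs_pos.mpr ht0
  set a := ‖x + t • h‖ with haa
  set b := ‖x - t • h‖ with hbb
  set c := ‖x‖ with hcc
  set M := ‖x‖ + ‖h‖ with hMM
  have hM0 : 0 ≤ M := by positivity
  have hth : ‖t • h‖ ≤ ‖h‖ := by
    rw [norm_smul, Real.norm_eq_abs]
    calc |t| * ‖h‖ ≤ 1 * ‖h‖ := by gcongr
      _ = ‖h‖ := one_mul _
  have haM : a ≤ M := (norm_add_le _ _).trans (by simpa [hMM] using add_le_add_left hth ‖x‖)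
  have hbM : b ≤ M := (norm_sub_le _ _).trans (by simpa [hMM] using add_le_add_left hth ‖x‖)
  have hcM : c ≤ M := le_add_of_nonneg_right (norm_nonneg _)
  have hac : |a - c| ≤ |t| * ‖h‖ := by
    calc |a - c| ≤ ‖(x + t • h) - x‖ := abs_norm_sub_norm_le _ _
      _ = ‖t • h‖ := by congr 1; abel
      _ = |t| * ‖h‖ := by rw [norm_smul, Real.norm_eq_abs]
  have hbc : |b - c| ≤ |t| * ‖h‖ := by
    calc |b - c| ≤ ‖(x - t • h) - x‖ := abs_norm_sub_norm_le _ _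
      _ = ‖t • h‖ := by rw [show (x - t • h) - x = -(t • h) by abel, norm_neg]
      _ = |t| * ‖h‖ := by rw [norm_smul, Real.norm_eq_abs]
  have h1 : |a ^ m - c ^ m| ≤ m * M ^ (m - 1) * (|t| * ‖h‖) :=
    (aux_abs_pow_sub_pow_le m (norm_nonneg _) (norm_nonneg _) haM hcM).trans (by gcongr)
  have h2 : |b ^ m - c ^ m| ≤ m * M ^ (m - 1) * (|t| * ‖h‖) :=
    (aux_abs_pow_sub_pow_le m (norm_nonneg _) (norm_nonneg _) hbM hcM).trans (by gcongr)
  have hnum : |a ^ m + b ^ m - 2 * c ^ m| ≤ 2 * m * M ^ (m - 1) * (|t| * ‖h‖) := by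
    have : a ^ m + b ^ m - 2 * c ^ m = (a ^ m - c ^ m) + (b ^ m - c ^ m) := by ring
    rw [this]
    calc |(a ^ m - c ^ m) + (b ^ m - c ^ m)| ≤ |a ^ m - c ^ m| + |b ^ m - c ^ m| :=
          abs_add_le _ _
      _ ≤ m * M ^ (m - 1) * (|t| * ‖h‖) + m * M ^ (m - 1) * (|t| * ‖h‖) := add_le_add h1 h2
      _ = 2 * m * M ^ (m - 1) * (|t| * ‖h‖) := by ring
  rw [abs_div, div_le_iff₀ htpos]
  calc |a ^ m + b ^ m - 2 * c ^ m| ≤ 2 * m * M ^ (m - 1) * (|t| * ‖h‖) := hnum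
    _ = 2 * m * (M ^ (m - 1) * ‖h‖) * |t| := by ring
    _ ≤ 2 * m * (M ^ (m - 1) * M) * |t| := by
        gcongr
        exact le_add_of_nonneg_left (norm_nonneg _)
    _ = 2 * m * M ^ m * |t| := by rw [← pow_succ]; congr 3; omega
    _ ≤ 2 * m * (2 ^ (m - 1) * (c ^ m + ‖h‖ ^ m)) * |t| := by
        gcongr
        exact add_pow_le (norm_nonneg _) (norm_nonneg _) m
    _ = 2 * m * (c ^ m + ‖h‖ ^ m) * |t| * 2 ^ (m - 1) := by ring
    _ ≤ 2 * m * (c ^ m + ‖h‖ ^ m) * |t| * 2 ^ m := by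
        have h2p : (2:ℝ) ^ (m - 1) ≤ 2 ^ m :=
          pow_le_pow_right₀ (by norm_num) (Nat.sub_le _ _)
        have hpre : 0 ≤ 2 * (m:ℝ) * (c ^ m + ‖h‖ ^ m) * |t| := by positivity
        exact mul_le_mul_of_nonneg_left h2p hpre
    _ = 2 * m * 2 ^ m * (c ^ m + ‖h‖ ^ m) * |t| := by ring
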